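/- Fix r ≥ 3, γ ∈ (0, 2^{1−r}) and c > 2. There exists ε > 0 such that: for any (ε,p)-pseudorandom r-uniform hypergraph 𝓗 on n vertices (n large) with p ≥ ln^{cr} n / n^{r−1} and Δ₂(𝓗) ≤ 2 ln n, any H ⊆ 𝓗, and any disjoint A, B ⊆ V(H) with |A| = m ≥ n/ln^c n, |B| ≥ 4m, and deg_H(a, B) ≥ (2^{1−r} + 2.5γ)·p·C(|B|, r−1) via (1, r−1)-edges for every a ∈ A, there exists a 2-matching for (A, B). -/

import Mathlib

set_option maxHeartbeats 1600000

open Finset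

/-- The number of edges of `E` with exactly one vertex in `T` and all other
vertices in `U`. -/
def eBetween (n : ℕ) (E : Finset (Finset (Fin n))) (T U : Finset (Fin n)) : ℕ :=
  (E.filter (fun s => (s ∩ T).card = 1 ∧ s \ T ⊆ U)).card

/-- `(ε,p)`-pseudorandomness of an `r`-uniform hypergraph on `Fin n`. -/
def Pseudorandom (r n : ℕ) (ε p : ℝ) (E : Finset (Finset (Fin n))) : Prop :=
  (∀ T U : Finset (Fin n), Disjoint T U → U.card ≤ T.card →
    (eBetween n E T U : ℝ) ≤
      (1 + ε) * p * T.card * (U.card.choose (r - 1)) +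
        T.card * (Real.log n) ^ ((1 : ℝ) + ε)) ∧
  (∀ T U : Finset (Fin n), Disjoint T U →
    ε * U.card ≤ (T.card : ℝ) → T.card ≤ U.card → (U.card : ℝ) ≤ n / 2 →
    (13 * (Nat.factorial (r - 1)) * Real.log n / (ε ^ 3 * p)) ^
        ((1 : ℝ) / (r - 1)) ≤ (U.card : ℝ) →
    (eBetween n E T U : ℝ) ≤ (1 + ε) * p * T.card * (U.card.choose (r - 1)))

/-- `degIn n E x U` is the number of hyperedges of `E` containing `x` and
otherwise contained in `U`. -/
def degIn (n : ℕ) (E : Finset (Finset (Fin n))) (x : Fin n) (U : Finset (Fin n)) : ℕ :=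
  (E.filter (fun s => x ∈ s ∧ s \ {x} ⊆ U)).card

/- Auxiliary arithmetic lemmas. -/

lemma aux_descFactorial_ratio (s : ℕ) (hs : 1 ≤ s) (k l j : ℕ) (h : s * k ≤ l) :
    s ^ j * k.descFactorial j ≤ l.descFactorial j := by
  induction j with
  | zero => simp
  | succ j ih =>
      rw [Nat.descFactorial_succ, Nat.descFactorial_succ, pow_succ]
      have h1 : s * (k - j) ≤ l - j := by
        rcases le_or_gt k j with hkj | hkj
        · simp [Nat.sub_eq_zero_of_le hkj]
        · have hsj : j ≤ s * j := Nat.le_mul_of_pos_left _ hs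
          have h2 : s * (k - j) = s * k - s * j := Nat.mul_sub ..
          omega
      calc s ^ j * s * ((k - j) * k.descFactorial j)
          = (s * (k - j)) * (s ^ j * k.descFactorial j) := by ring
        _ ≤ (l - j) * l.descFactorial j := Nat.mul_le_mul h1 ih

lemma aux_choose_ratio (s : ℕ) (hs : 1 ≤ s) (k l j : ℕ) (h : s * k ≤ l) :
    s ^ j * k.choose j ≤ l.choose j := by
  have hd := aux_descFactorial_ratio s hs k l j h
  rw [Nat.descFactorial_eq_factorial_mul_choose, Nat.descFactorial_eq_factorial_mul_choose] at hd
  have : j.factorial * (s ^ j * k.choose j) ≤ j.factorial * l.choose j := by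
    calc j.factorial * (s ^ j * k.choose j) = s ^ j * (j.factorial * k.choose j) := by ring
      _ ≤ _ := hd
  exact Nat.le_of_mul_le_mul_left this j.factorial_pos

lemma aux_pow_le_descFactorial (m j : ℕ) (h : j ≤ m) : (3 * m) ^ j ≤ (4 * m).descFactorial j := by
  induction j with
  | zero => simp
  | succ j ih =>
      have ih' := ih (le_trans (Nat.le_succ j) h)
      rw [Nat.descFactorial_succ, pow_succ]
      have h1 : 3 * m ≤ 4 * m - j := by omega
      calc (3 * m) ^ j * (3 * m) = (3 * m) * (3 * m) ^ j := by ring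
        _ ≤ (4 * m - j) * (4 * m).descFactorial j := Nat.mul_le_mul h1 ih'

lemma aux_pow_le_choose (m j : ℕ) (h : j ≤ m) :
    ((3 * m) ^ j : ℝ) ≤ (j.factorial : ℝ) * ((4 * m).choose j : ℝ) := by
  have := aux_pow_le_descFactorial m j h
  rw [Nat.descFactorial_eq_factorial_mul_choose] at this
  exact_mod_cast this


lemma eBetween_mono (n : ℕ) (E : Finset (Finset (Fin n))) (W T X X' : Finset (Fin n))
    (hWT : W ⊆ T) (hXX : X ⊆ X') (hdisj : Disjoint T X') :
    eBetween n E W X ≤ eBetween n E T X' := by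
  classical
  apply Finset.card_le_card
  intro s hs
  rw [Finset.mem_filter] at hs ⊢
  obtain ⟨hsE, hs1, hs2⟩ := hs
  have hsub : s ⊆ W ∪ X := by
    intro x hx
    by_cases hxW : x ∈ W
    · exact Finset.mem_union_left _ hxW
    · exact Finset.mem_union_right _ (hs2 (Finset.mem_sdiff.mpr ⟨hx, hxW⟩))
  have hsT : s ∩ T = s ∩ W := by
    apply Finset.Subset.antisymm
    · intro x hx
      rw [Finset.mem_inter] at hx ⊢
      refine ⟨hx.1, ?_⟩
      rcases Finset.mem_union.mp (hsub hx.1) with h | h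
      · exact h
      · exact absurd (hXX h) (Finset.disjoint_left.mp hdisj hx.2)
    · exact Finset.inter_subset_inter Finset.Subset.rfl hWT
  refine ⟨hsE, ?_, ?_⟩
  · rw [hsT]; exact hs1
  · intro x hx
    rw [Finset.mem_sdiff] at hx
    exact hXX (hs2 (Finset.mem_sdiff.mpr ⟨hx.1, fun hW => hx.2 (hWT hW)⟩))

lemma expansion_lemma (r n m : ℕ) (ε p D : ℝ) (EH : Finset (Finset (Fin n)))
    (A B : Finset (Fin n)) (hps : Pseudorandom r n ε p EH)
    (hAB : Disjoint A B) (hAcard : A.card = m) (hBcard : 4 * m ≤ B.card)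
    (hε0 : 0 < ε) (hε4 : ε ≤ 1 / 4) (hp0 : 0 < p) (hlg1 : 1 ≤ Real.log n)
    (hmn : 5 * m ≤ n)
    (M1 : 2 * (1 + ε) * (p * ((m.choose (r - 1) : ℕ) : ℝ)) + 2 * (Real.log n) ^ ((1 : ℝ) + ε)
      < D - 2 * ((r : ℝ) - 1) * Real.log n)
    (M2 : (1 + ε) * (p * (((2 * m).choose (r - 1) : ℕ) : ℝ))
      < D - 2 * ((r : ℝ) - 1) * Real.log n)
    (M3 : (13 * (Nat.factorial (r - 1)) * Real.log n / (ε ^ 3 * p)) ^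
        ((1 : ℝ) / (r - 1)) ≤ (m : ℝ)) :
    ∀ W ⊆ A, ∀ X ⊆ B, W.Nonempty →
      ((W.card : ℝ) * (D - 2 * ((r : ℝ) - 1) * Real.log n) ≤ (eBetween n EH W X : ℝ)) →
      2 * W.card ≤ X.card := by
  classical
  intro W hWA X hXB hWne hcount
  by_contra hX
  push_neg at hX
  set D' : ℝ := D - 2 * ((r : ℝ) - 1) * Real.log n with hD'
  set w := W.card with hw
  have hw1 : 1 ≤ w := Finset.card_pos.mpr hWne
  have hwm : w ≤ m := by rw [hw, ← hAcard]; exact Finset.card_le_card hWA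
  set u := 2 * w - 1 with hu
  have huw : w ≤ u := by omega
  have hXu : X.card ≤ u := by omega
  have hucast : (u : ℝ) = 2 * (w : ℝ) - 1 := by
    have h2w : 1 ≤ 2 * w := by omega
    rw [hu]
    push_cast [Nat.cast_sub h2w]
    ring
  have hwpos : (0 : ℝ) < (w : ℝ) := by exact_mod_cast hw1
  have hupos : (0 : ℝ) ≤ (u : ℝ) := by positivity
  have hlg0 : (0 : ℝ) ≤ Real.log n := le_trans zero_le_one hlg1
  have hrp0 : (0 : ℝ) ≤ (Real.log n) ^ ((1 : ℝ) + ε) := Real.rpow_nonneg hlg0 _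
  have hum4 : u ≤ B.card := by omega
  obtain ⟨X', hXX', hX'B, hX'card⟩ := Finset.exists_subsuperset_card_eq hXB hXu hum4
  have hdisjWX' : Disjoint W X' := (hAB.mono hWA hX'B)
  rcases le_or_gt (2 * w) m with hwm2 | hwm2
  · -- Case 1: use the first pseudorandomness condition
    have hum : u ≤ m := by omega
    obtain ⟨T', hWT', hT'A, hT'card⟩ :=
      Finset.exists_subsuperset_card_eq hWA huw (by omega : u ≤ A.card)
    have hdisjT : Disjoint T' X' := hAB.mono hT'A hX'B
    have hps1 := hps.1 T' X' hdisjT (by rw [hT'card, hX'card])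
    rw [hT'card, hX'card] at hps1
    have hmono : eBetween n EH W X ≤ eBetween n EH T' X' :=
      eBetween_mono n EH W T' X X' hWT' hXX' hdisjT
    have hC : ((u.choose (r - 1) : ℕ) : ℝ) ≤ ((m.choose (r - 1) : ℕ) : ℝ) :=
      Nat.cast_le.mpr (Nat.choose_le_choose _ hum)
    have hchain : (w : ℝ) * D' ≤
        (1 + ε) * p * u * ((u.choose (r - 1) : ℕ) : ℝ)
          + (u : ℝ) * (Real.log n) ^ ((1 : ℝ) + ε) := by
      calc (w : ℝ) * D' ≤ (eBetween n EH W X : ℝ) := hcount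
        _ ≤ (eBetween n EH T' X' : ℝ) := Nat.cast_le.mpr hmono
        _ ≤ _ := hps1
    have hstep : (1 + ε) * p * u * ((u.choose (r - 1) : ℕ) : ℝ)
          + (u : ℝ) * (Real.log n) ^ ((1 : ℝ) + ε) ≤
        (w : ℝ) * (2 * (1 + ε) * (p * ((m.choose (r - 1) : ℕ) : ℝ))
          + 2 * (Real.log n) ^ ((1 : ℝ) + ε)) := by
      have h1 : (1 + ε) * p * u * ((u.choose (r - 1) : ℕ) : ℝ) ≤
          (1 + ε) * p * (2 * w) * ((m.choose (r - 1) : ℕ) : ℝ) := by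
        have hu2w : (u : ℝ) ≤ 2 * w := by rw [hucast]; linarith
        gcongr
      have h2 : (u : ℝ) * (Real.log n) ^ ((1 : ℝ) + ε) ≤
          (w : ℝ) * (2 * (Real.log n) ^ ((1 : ℝ) + ε)) := by
        have hu2w : (u : ℝ) ≤ 2 * w := by rw [hucast]; linarith
        nlinarith
      calc (1 + ε) * p * u * ((u.choose (r - 1) : ℕ) : ℝ)
            + (u : ℝ) * (Real.log n) ^ ((1 : ℝ) + ε)
          ≤ (1 + ε) * p * (2 * w) * ((m.choose (r - 1) : ℕ) : ℝ)
            + (w : ℝ) * (2 * (Real.log n) ^ ((1 : ℝ) + ε)) := by linarith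
        _ = (w : ℝ) * (2 * (1 + ε) * (p * ((m.choose (r - 1) : ℕ) : ℝ))
            + 2 * (Real.log n) ^ ((1 : ℝ) + ε)) := by ring
    have hlt := mul_lt_mul_of_pos_left M1 hwpos
    linarith
  · -- Case 2: use the second pseudorandomness condition
    have hmu : m ≤ u := by omega
    have hu2m : u ≤ 2 * m := by omega
    have hεcond : ε * ((X'.card : ℕ) : ℝ) ≤ (W.card : ℝ) := by
      rw [hX'card, ← hw]
      have h1 : ε * (u : ℝ) ≤ (1 / 4) * (u : ℝ) := mul_le_mul_of_nonneg_right hε4 hupos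
      have h2 : (1 / 4 : ℝ) * (u : ℝ) ≤ (w : ℝ) := by rw [hucast]; linarith
      linarith
    have hcard2 : W.card ≤ X'.card := by rw [hX'card, ← hw]; exact huw
    have hhalf : ((X'.card : ℕ) : ℝ) ≤ (n : ℝ) / 2 := by
      rw [hX'card]
      have h5 : (5 : ℝ) * (m : ℝ) ≤ (n : ℝ) := by exact_mod_cast hmn
      have hwmR : (w : ℝ) ≤ (m : ℝ) := by exact_mod_cast hwm
      rw [hucast]; linarith
    have hL : (13 * (Nat.factorial (r - 1)) * Real.log n / (ε ^ 3 * p)) ^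
        ((1 : ℝ) / (r - 1)) ≤ ((X'.card : ℕ) : ℝ) := by
      rw [hX'card]
      refine le_trans M3 ?_
      exact_mod_cast hmu
    have hps2 := hps.2 W X' hdisjWX' hεcond hcard2 hhalf hL
    rw [hX'card] at hps2
    have hmono : eBetween n EH W X ≤ eBetween n EH W X' :=
      eBetween_mono n EH W W X X' Finset.Subset.rfl hXX' hdisjWX'
    have hC : ((u.choose (r - 1) : ℕ) : ℝ) ≤ (((2 * m).choose (r - 1) : ℕ) : ℝ) :=
      Nat.cast_le.mpr (Nat.choose_le_choose _ hu2m)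
    have hchain : (w : ℝ) * D' ≤ (w : ℝ) * ((1 + ε) * (p * (((2 * m).choose (r - 1) : ℕ) : ℝ))) := by
      calc (w : ℝ) * D' ≤ (eBetween n EH W X : ℝ) := hcount
        _ ≤ (eBetween n EH W X' : ℝ) := Nat.cast_le.mpr hmono
        _ ≤ (1 + ε) * p * W.card * ((u.choose (r - 1) : ℕ) : ℝ) := hps2
        _ ≤ _ := by
            rw [← hw]
            have h0 : (0 : ℝ) ≤ (1 + ε) * p * (w : ℝ) := by positivity
            nlinarith [mul_le_mul_of_nonneg_left hC h0]
    have hlt := mul_lt_mul_of_pos_left M2 hwpos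
    linarith


lemma hall_select {V Λ : Type*} [DecidableEq V] [DecidableEq Λ]
    (Aset : Finset V) (classes : V → Finset Λ) (fib : V → Λ → Finset V) (v₀ : V)
    (hcl : ∀ a ∈ Aset, 2 ≤ (classes a).card)
    (hkey : ∀ W ⊆ Aset, ∀ X : Finset V,
      (∀ a ∈ W, ∃ miss : Finset Λ, miss ⊆ classes a ∧ miss.card ≤ 1 ∧
        ∀ E ∈ classes a, E ∉ miss → fib a E ⊆ X) → 2 * W.card ≤ X.card) :
    ∃ x y : V → V,
      (∀ a ∈ Aset, ∃ E₁, E₁ ∈ classes a ∧ ∃ E₂, E₂ ∈ classes a ∧ E₁ ≠ E₂ ∧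
        x a ∈ fib a E₁ ∧ y a ∈ fib a E₂) ∧
      (∀ a ∈ Aset, x a ≠ y a) ∧
      (∀ a ∈ Aset, ∀ b ∈ Aset, a ≠ b →
        x a ≠ x b ∧ x a ≠ y b ∧ y a ≠ x b ∧ y a ≠ y b) := by
  classical
  -- two designated distinct classes for each vertex of `Aset`
  have htwo : ∀ a, a ∈ Aset → ∃ q : Λ × Λ, q.1 ∈ classes a ∧ q.2 ∈ classes a ∧ q.1 ≠ q.2 := by
    intro a ha
    obtain ⟨E₁, hE₁, E₂, hE₂, hne⟩ := Finset.one_lt_card.mp (lt_of_lt_of_le one_lt_two (hcl a ha))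
    exact ⟨(E₁, E₂), hE₁, hE₂, hne⟩
  choose cp hcp1 hcp2 hcpne using htwo
  set dum : V → Finset Λ :=
    fun a => if h : a ∈ Aset then ((classes a).erase (cp a h).1).erase (cp a h).2 else ∅
    with hdum_def
  have hdum_card : ∀ a (ha : a ∈ Aset), (dum a).card + 2 = (classes a).card := by
    intro a ha
    have h1 : dum a = ((classes a).erase (cp a ha).1).erase (cp a ha).2 := dif_pos ha
    rw [h1, Finset.card_erase_of_mem, Finset.card_erase_of_mem (hcp1 a ha)]
    · have := hcl a ha
      have hc1 := hcp1 a ha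
      have h2 : 1 ≤ (classes a).card := by omega
      omega
    · exact Finset.mem_erase.mpr ⟨(hcpne a ha).symm, hcp2 a ha⟩
  -- the bipartite graph for Hall's theorem
  set t : {z : V × Λ // z.1 ∈ Aset ∧ z.2 ∈ classes z.1} → Finset (V ⊕ (V × Λ)) :=
    fun z => ((fib z.1.1 z.1.2).image Sum.inl) ∪
      ((dum z.1.1).image (fun E => Sum.inr (z.1.1, E))) with ht_def
  have hall_cond : ∀ S : Finset {z : V × Λ // z.1 ∈ Aset ∧ z.2 ∈ classes z.1},
      S.card ≤ (S.biUnion t).card := by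
    intro S
    set Wset := S.image (fun z => z.1.1) with hWset
    have hWsub : Wset ⊆ Aset := by
      intro a ha
      obtain ⟨z, hz, rfl⟩ := Finset.mem_image.mp ha
      exact z.2.1
    set chosen : V → Finset Λ :=
      fun a => (S.filter (fun z => z.1.1 = a)).image (fun z => z.1.2) with hchosen
    have hchosen_sub : ∀ a, chosen a ⊆ classes a := by
      intro a E hE
      obtain ⟨z, hz, rfl⟩ := Finset.mem_image.mp hE
      have h1 := (Finset.mem_filter.mp hz).2
      exact h1 ▸ z.2.2
    have hfibcard : ∀ a, (S.filter (fun z => z.1.1 = a)).card = (chosen a).card := by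
      intro a
      rw [hchosen]
      symm
      apply Finset.card_image_of_injOn
      intro z hz z' hz' hzz
      have h1 := (Finset.mem_filter.mp hz).2
      have h2 := (Finset.mem_filter.mp hz').2
      exact Subtype.ext (Prod.ext (by rw [h1, h2]) hzz)
    set XU := S.biUnion (fun z => fib z.1.1 z.1.2) with hXU
    set DU := S.biUnion (fun z => (dum z.1.1).image (fun E => (z.1.1, E))) with hDU
    have hsplit : S.biUnion t = XU.image Sum.inl ∪ DU.image Sum.inr := by
      ext w
      constructor
      · intro hw
        obtain ⟨z, hz, hw'⟩ := Finset.mem_biUnion.mp hw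
        rcases Finset.mem_union.mp hw' with h | h
        · obtain ⟨b, hb, rfl⟩ := Finset.mem_image.mp h
          exact Finset.mem_union_left _ (Finset.mem_image.mpr
            ⟨b, Finset.mem_biUnion.mpr ⟨z, hz, hb⟩, rfl⟩)
        · obtain ⟨E, hE, rfl⟩ := Finset.mem_image.mp h
          exact Finset.mem_union_right _ (Finset.mem_image.mpr
            ⟨(z.1.1, E), Finset.mem_biUnion.mpr ⟨z, hz, Finset.mem_image.mpr ⟨E, hE, rfl⟩⟩, rfl⟩)
      · intro hw
        rcases Finset.mem_union.mp hw with h | h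
        · obtain ⟨b, hb, rfl⟩ := Finset.mem_image.mp h
          obtain ⟨z, hz, hb'⟩ := Finset.mem_biUnion.mp hb
          exact Finset.mem_biUnion.mpr ⟨z, hz, Finset.mem_union_left _
            (Finset.mem_image.mpr ⟨b, hb', rfl⟩)⟩
        · obtain ⟨pr, hpr, rfl⟩ := Finset.mem_image.mp h
          obtain ⟨z, hz, hpr'⟩ := Finset.mem_biUnion.mp hpr
          obtain ⟨E, hE, hpr''⟩ := Finset.mem_image.mp hpr'
          refine Finset.mem_biUnion.mpr ⟨z, hz, Finset.mem_union_right _ ?_⟩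
          exact Finset.mem_image.mpr ⟨E, hE, by rw [hpr'']⟩
    have hcard_split : (S.biUnion t).card = XU.card + DU.card := by
      rw [hsplit, Finset.card_union_of_disjoint, Finset.card_image_of_injective _ Sum.inl_injective,
        Finset.card_image_of_injective _ Sum.inr_injective]
      rw [Finset.disjoint_left]
      rintro w h1 h2
      obtain ⟨b, _, rfl⟩ := Finset.mem_image.mp h1
      obtain ⟨pr, _, h⟩ := Finset.mem_image.mp h2
      exact Sum.inl_ne_inr h.symm
    have hDUeq : DU = Wset.biUnion (fun a => (dum a).image (fun E => (a, E))) := by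
      ext pr
      constructor
      · intro h
        obtain ⟨z, hz, hpr⟩ := Finset.mem_biUnion.mp h
        exact Finset.mem_biUnion.mpr ⟨z.1.1, Finset.mem_image_of_mem _ hz, hpr⟩
      · intro h
        obtain ⟨a, ha, hpr⟩ := Finset.mem_biUnion.mp h
        obtain ⟨z, hz, rfl⟩ := Finset.mem_image.mp ha
        exact Finset.mem_biUnion.mpr ⟨z, hz, hpr⟩
    have hDUcard : DU.card = ∑ a ∈ Wset, (dum a).card := by
      rw [hDUeq, Finset.card_biUnion]
      · refine Finset.sum_congr rfl ?_
        intro a _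
        exact Finset.card_image_of_injective _ (fun E E' h => (Prod.ext_iff.mp h).2)
      · intro a _ b _ hab
        rw [Function.onFun, Finset.disjoint_left]
        rintro pr h1 h2
        obtain ⟨E, _, rfl⟩ := Finset.mem_image.mp h1
        obtain ⟨E', _, h⟩ := Finset.mem_image.mp h2
        exact hab ((Prod.ext_iff.mp h).1).symm
    have hScard : S.card = ∑ a ∈ Wset, (S.filter (fun z => z.1.1 = a)).card := by
      apply Finset.card_eq_sum_card_fiberwise
      intro z hz
      exact Finset.mem_image_of_mem _ hz
    set W01 := Wset.filter (fun a => (classes a).card ≤ (chosen a).card + 1) with hW01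
    have hkey_applied : 2 * W01.card ≤ XU.card := by
      apply hkey W01 ((Finset.filter_subset _ _).trans hWsub) XU
      intro a ha
      obtain ⟨haW, hacard⟩ := Finset.mem_filter.mp ha
      refine ⟨classes a \ chosen a, Finset.sdiff_subset, ?_, ?_⟩
      · have h1 := Finset.card_sdiff_of_subset (hchosen_sub a)
        omega
      · intro E hEcl hEmiss
        have hEch : E ∈ chosen a := by
          by_contra h
          exact hEmiss (Finset.mem_sdiff.mpr ⟨hEcl, h⟩)
        obtain ⟨z, hz, hz2⟩ := Finset.mem_image.mp hEch
        have hz1 := (Finset.mem_filter.mp hz).2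
        intro b hb
        apply Finset.mem_biUnion.mpr
        exact ⟨z, (Finset.mem_filter.mp hz).1, by rw [hz1, hz2]; exact hb⟩
    have hperA : ∀ a ∈ Wset, (S.filter (fun z => z.1.1 = a)).card ≤
        (dum a).card + (if a ∈ W01 then 2 else 0) := by
      intro a ha
      rw [hfibcard a]
      have h2 := hdum_card a (hWsub ha)
      have h3 := Finset.card_le_card (hchosen_sub a)
      by_cases h : a ∈ W01
      · simp only [h, if_true]
        omega
      · simp only [h, if_false]
        have h4 : ¬ ((classes a).card ≤ (chosen a).card + 1) := by
          intro hcon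
          exact h (Finset.mem_filter.mpr ⟨ha, hcon⟩)
        omega
    have hsum2 : ∑ a ∈ Wset, (if a ∈ W01 then 2 else 0) = 2 * W01.card := by
      rw [Finset.sum_ite_mem]
      have : Wset ∩ W01 = W01 := Finset.inter_eq_right.mpr (Finset.filter_subset _ _)
      rw [this, Finset.sum_const, smul_eq_mul, mul_comm]
    calc S.card = ∑ a ∈ Wset, (S.filter (fun z => z.1.1 = a)).card := hScard
      _ ≤ ∑ a ∈ Wset, ((dum a).card + (if a ∈ W01 then 2 else 0)) := Finset.sum_le_sum hperA
      _ = (∑ a ∈ Wset, (dum a).card) + ∑ a ∈ Wset, (if a ∈ W01 then 2 else 0) :=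
          Finset.sum_add_distrib
      _ = (∑ a ∈ Wset, (dum a).card) + 2 * W01.card := by rw [hsum2]
      _ ≤ DU.card + XU.card := by
          rw [hDUcard]
          omega
      _ = (S.biUnion t).card := by rw [hcard_split]; omega
  obtain ⟨F, hFinj, hFmem⟩ := (Finset.all_card_le_biUnion_card_iff_exists_injective t).mp hall_cond
  -- extraction of two `Sum.inl` values per vertex
  have hsel : ∀ a, a ∈ Aset → ∃ z₁ z₂ : {z : V × Λ // z.1 ∈ Aset ∧ z.2 ∈ classes z.1},
      ∃ b₁ b₂ : V, z₁.1.1 = a ∧ z₂.1.1 = a ∧ z₁ ≠ z₂ ∧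
      F z₁ = Sum.inl b₁ ∧ b₁ ∈ fib a z₁.1.2 ∧
      F z₂ = Sum.inl b₂ ∧ b₂ ∈ fib a z₂.1.2 := by
    intro a ha
    set nodes : Finset {z : V × Λ // z.1 ∈ Aset ∧ z.2 ∈ classes z.1} :=
      (classes a).attach.image
        (fun E => (⟨(a, E.val), ⟨ha, E.prop⟩⟩ : {z : V × Λ // z.1 ∈ Aset ∧ z.2 ∈ classes z.1}))
      with hnodes
    have hnodes_fst : ∀ z ∈ nodes, z.1.1 = a := by
      intro z hz
      obtain ⟨E, _, rfl⟩ := Finset.mem_image.mp hz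
      rfl
    have hnodescard : nodes.card = (classes a).card := by
      rw [hnodes, Finset.card_image_of_injective, Finset.card_attach]
      intro E E' h
      exact Subtype.ext (Prod.ext_iff.mp (Subtype.ext_iff.mp h)).2
    have hRcard : (nodes.filter (fun z => (F z).isRight)).card ≤ (dum a).card := by
      calc (nodes.filter (fun z => (F z).isRight)).card
          ≤ ((dum a).image (fun E => (Sum.inr (a, E) : V ⊕ (V × Λ)))).card := by
            apply Finset.card_le_card_of_injOn F
            · intro z hz
              obtain ⟨hzn, hzR⟩ := Finset.mem_filter.mp hz
              have hFz := hFmem z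
              rcases Finset.mem_union.mp hFz with h | h
              · obtain ⟨b, _, hb⟩ := Finset.mem_image.mp h
                rw [← hb] at hzR
                simp at hzR
              · obtain ⟨E, hE, hb⟩ := Finset.mem_image.mp h
                rw [hnodes_fst z hzn] at hb hE
                exact Finset.mem_image.mpr ⟨E, hE, hb⟩
            · intro z _ z' _ h
              exact hFinj h
        _ ≤ (dum a).card := Finset.card_image_le
    have hLbig : 1 < (nodes.filter (fun z => ¬ (F z).isRight)).card := by
      have h1 := Finset.card_filter_add_card_filter_not
        (s := nodes) (p := fun z => (F z).isRight)
      have h2 := hcl a ha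
      have h3 := hdum_card a ha
      omega
    obtain ⟨z₁, hz₁, z₂, hz₂, hzne⟩ := Finset.one_lt_card.mp hLbig
    have hleft : ∀ z ∈ nodes.filter (fun z => ¬ (F z).isRight),
        ∃ b, F z = Sum.inl b ∧ b ∈ fib a z.1.2 := by
      intro z hz
      obtain ⟨hzn, hzL⟩ := Finset.mem_filter.mp hz
      have hFz := hFmem z
      rcases Finset.mem_union.mp hFz with h | h
      · obtain ⟨b, hb, hb'⟩ := Finset.mem_image.mp h
        rw [hnodes_fst z hzn] at hb
        exact ⟨b, hb'.symm, hb⟩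
      · obtain ⟨E, _, hb⟩ := Finset.mem_image.mp h
        rw [← hb] at hzL
        simp at hzL
    obtain ⟨b₁, hb₁, hb₁'⟩ := hleft z₁ hz₁
    obtain ⟨b₂, hb₂, hb₂'⟩ := hleft z₂ hz₂
    exact ⟨z₁, z₂, b₁, b₂, hnodes_fst z₁ (Finset.mem_of_mem_filter _ hz₁),
      hnodes_fst z₂ (Finset.mem_of_mem_filter _ hz₂), hzne, hb₁, hb₁', hb₂, hb₂'⟩
  choose Z1 Z2 Bx By hZ1a hZ2a hZne hFx hbx hFy hby using hsel
  refine ⟨fun a => if h : a ∈ Aset then Bx a h else v₀,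
          fun a => if h : a ∈ Aset then By a h else v₀, ?_, ?_, ?_⟩
  · intro a ha
    refine ⟨(Z1 a ha).1.2, ?_, (Z2 a ha).1.2, ?_, ?_, ?_, ?_⟩
    · have := (Z1 a ha).2.2
      rwa [hZ1a a ha] at this
    · have := (Z2 a ha).2.2
      rwa [hZ2a a ha] at this
    · intro hEE
      apply hZne a ha
      exact Subtype.ext (Prod.ext (by rw [hZ1a a ha, hZ2a a ha]) hEE)
    · simp only [dif_pos ha]; exact hbx a ha
    · simp only [dif_pos ha]; exact hby a ha
  · intro a ha
    simp only [dif_pos ha]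
    intro h
    apply hZne a ha
    apply hFinj
    rw [hFx a ha, hFy a ha, h]
  · intro a ha b hb hab
    have hZab : ∀ (za : {z : V × Λ // z.1 ∈ Aset ∧ z.2 ∈ classes z.1})
        (zb : {z : V × Λ // z.1 ∈ Aset ∧ z.2 ∈ classes z.1}),
        za.1.1 = a → zb.1.1 = b → za ≠ zb := by
      intro za zb h1 h2 h
      rw [h] at h1
      rw [h1] at h2
      exact hab h2
    simp only [dif_pos ha, dif_pos hb]
    refine ⟨?_, ?_, ?_, ?_⟩
    · intro h
      exact hZab _ _ (hZ1a a ha) (hZ1a b hb) (hFinj (by rw [hFx a ha, hFx b hb, h]))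
    · intro h
      exact hZab _ _ (hZ1a a ha) (hZ2a b hb) (hFinj (by rw [hFx a ha, hFy b hb, h]))
    · intro h
      exact hZab _ _ (hZ2a a ha) (hZ1a b hb) (hFinj (by rw [hFy a ha, hFx b hb, h]))
    · intro h
      exact hZab _ _ (hZ2a a ha) (hZ2a b hb) (hFinj (by rw [hFy a ha, hFy b hb, h]))

theorem main_matching (r n m : ℕ) (ε p D : ℝ) (EH Eh : Finset (Finset (Fin n)))
    (A B : Finset (Fin n))
    (hr : 3 ≤ r)
    (hunif : ∀ s ∈ EH, s.card = r)
    (hps : Pseudorandom r n ε p EH)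
    (hcod : ∀ x y : Fin n, x ≠ y →
      ((EH.filter (fun s => x ∈ s ∧ y ∈ s)).card : ℝ) ≤ 2 * Real.log n)
    (hEsub : Eh ⊆ EH)
    (hAB : Disjoint A B)
    (hAcard : A.card = m)
    (hBcard : 4 * m ≤ B.card)
    (hm1 : 1 ≤ m)
    (hε0 : 0 < ε) (hε4 : ε ≤ 1 / 4)
    (hp0 : 0 < p)
    (hlg1 : 1 ≤ Real.log n)
    (hdeg : ∀ a ∈ A, D ≤ (degIn n Eh a B : ℝ))
    (hD2 : (2 : ℝ) ≤ D)
    (M1 : 2 * (1 + ε) * (p * ((m.choose (r - 1) : ℕ) : ℝ)) + 2 * (Real.log n) ^ ((1 : ℝ) + ε)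
      < D - 2 * ((r : ℝ) - 1) * Real.log n)
    (M2 : (1 + ε) * (p * (((2 * m).choose (r - 1) : ℕ) : ℝ))
      < D - 2 * ((r : ℝ) - 1) * Real.log n)
    (M3 : (13 * (Nat.factorial (r - 1)) * Real.log n / (ε ^ 3 * p)) ^
        ((1 : ℝ) / (r - 1)) ≤ (m : ℝ)) :
    ∃ (e f : Fin n → Finset (Fin n)) (τ : Finset (Fin n) → Fin n),
      (∀ a ∈ A, e a ∈ Eh ∧ f a ∈ Eh ∧ a ∈ e a ∧ a ∈ f a ∧ e a ≠ f a ∧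
        (e a ∩ A).card = 1 ∧ (e a ∩ B).card = r - 1 ∧
        (f a ∩ A).card = 1 ∧ (f a ∩ B).card = r - 1 ∧
        τ (e a) ∈ e a ∩ B ∧ τ (f a) ∈ f a ∩ B) ∧
      (∀ a ∈ A, ∀ b ∈ A, a ≠ b → e a ≠ e b ∧ e a ≠ f b ∧ f a ≠ f b) ∧
      (∀ a ∈ A, ∀ b ∈ A,
        ∀ g ∈ ({e a, f a} : Finset (Finset (Fin n))),
        ∀ g' ∈ ({e b, f b} : Finset (Finset (Fin n))),
          g ≠ g' → τ g ≠ τ g') := by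
  classical
  have hB4 : 4 ≤ B.card := le_trans (by omega) hBcard
  have hn0 : 0 < n := by
    obtain ⟨b0, hb0⟩ := Finset.card_pos.mp (by omega : 0 < B.card)
    exact Fin.pos_iff_nonempty.mpr ⟨b0⟩
  have hlg0 : (0 : ℝ) ≤ Real.log n := le_trans zero_le_one hlg1
  have hmn : 5 * m ≤ n := by
    have h1 : (A ∪ B).card ≤ Fintype.card (Fin n) := Finset.card_le_univ _
    rw [Finset.card_union_of_disjoint hAB, hAcard, Fintype.card_fin] at h1
    omega
  set lg := Real.log n with hlg_def
  set Ea : Fin n → Finset (Finset (Fin n)) :=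
    fun a => Eh.filter (fun s => a ∈ s ∧ s \ {a} ⊆ B) with hEa_def
  have hdegEa : ∀ a, (degIn n Eh a B : ℕ) = (Ea a).card := fun a => rfl
  have hEa_mem : ∀ {a g}, g ∈ Ea a → g ∈ Eh ∧ a ∈ g ∧ g \ {a} ⊆ B := by
    intro a g hg
    have h := Finset.mem_filter.mp hg
    exact ⟨h.1, h.2.1, h.2.2⟩
  have hcardr : ∀ {g}, g ∈ Eh → g.card = r := fun {g} hg => hunif _ (hEsub hg)
  have hcapA : ∀ {a g}, a ∈ A → g ∈ Ea a → g ∩ A = {a} := by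
    intro a g ha hg
    obtain ⟨hgE, hag, hsub⟩ := hEa_mem hg
    apply Finset.Subset.antisymm
    · intro x hx
      rw [Finset.mem_inter] at hx
      rw [Finset.mem_singleton]
      by_contra hxa
      have hx' : x ∈ g \ {a} := Finset.mem_sdiff.mpr ⟨hx.1, by simp [hxa]⟩
      exact (Finset.disjoint_left.mp hAB hx.2) (hsub hx')
    · intro x hx
      rw [Finset.mem_singleton] at hx
      subst hx
      exact Finset.mem_inter.mpr ⟨hag, ha⟩
  have hcapB : ∀ {a g}, a ∈ A → g ∈ Ea a → g ∩ B = g.erase a := by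
    intro a g ha hg
    obtain ⟨hgE, hag, hsub⟩ := hEa_mem hg
    ext x
    rw [Finset.mem_inter, Finset.mem_erase]
    constructor
    · rintro ⟨hxg, hxB⟩
      refine ⟨?_, hxg⟩
      rintro rfl
      exact (Finset.disjoint_left.mp hAB ha) hxB
    · rintro ⟨hxa, hxg⟩
      exact ⟨hxg, hsub (Finset.mem_sdiff.mpr ⟨hxg, by simp [hxa]⟩)⟩
  set Eab : Fin n → Fin n → Finset (Finset (Fin n)) :=
    fun a b => (Ea a).filter (fun s => b ∈ s) with hEab_def
  set Nset : Fin n → Finset (Fin n) :=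
    fun a => B.filter (fun b => (Eab a b).Nonempty) with hNset_def
  set classes : Fin n → Finset (Finset (Finset (Fin n))) :=
    fun a => (Nset a).image (fun b => Eab a b) with hclasses_def
  set fib : Fin n → Finset (Finset (Fin n)) → Finset (Fin n) :=
    fun a E => (Nset a).filter (fun b => Eab a b = E) with hfib_def
  have hNsetB : ∀ a, Nset a ⊆ B := fun a => Finset.filter_subset _ _
  have hfibN : ∀ a E, fib a E ⊆ Nset a := fun a E => Finset.filter_subset _ _
  have hfib_card : ∀ a, a ∈ A → ∀ E, E ∈ classes a → (fib a E).card ≤ r - 1 := by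
    intro a ha E hE
    obtain ⟨b₀, hb₀, hEb₀⟩ := Finset.mem_image.mp hE
    obtain ⟨g₀, hg₀⟩ := (Finset.mem_filter.mp hb₀).2
    have hg₀E : g₀ ∈ E := hEb₀ ▸ hg₀
    have hsub : fib a E ⊆ g₀.erase a := by
      intro b hb
      obtain ⟨hbN, hbE⟩ := Finset.mem_filter.mp hb
      have hg₀b : g₀ ∈ Eab a b := hbE ▸ hg₀E
      have hbg₀ : b ∈ g₀ := (Finset.mem_filter.mp hg₀b).2
      refine Finset.mem_erase.mpr ⟨?_, hbg₀⟩
      intro hba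
      apply Finset.disjoint_left.mp hAB ha
      rw [← hba]
      exact (hNsetB a) hbN
    calc (fib a E).card ≤ (g₀.erase a).card := Finset.card_le_card hsub
      _ = r - 1 := by
        have hg₀Ea : g₀ ∈ Ea a := (Finset.mem_filter.mp hg₀).1
        rw [Finset.card_erase_of_mem (hEa_mem hg₀Ea).2.1, hcardr (hEa_mem hg₀Ea).1]
  have htwo : ∀ a, a ∈ A → ∃ E₁, E₁ ∈ classes a ∧ ∃ E₂, E₂ ∈ classes a ∧ E₁ ≠ E₂ := by
    intro a ha
    have hEa2 : 2 ≤ (Ea a).card := by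
      have h1 := hdeg a ha
      have h2 : (2 : ℝ) ≤ ((Ea a).card : ℝ) := by
        rw [← hdegEa a] at *
        exact le_trans hD2 h1
      exact_mod_cast h2
    obtain ⟨g, hg, h, hh, hgh⟩ := Finset.one_lt_card.mp (by omega : 1 < (Ea a).card)
    have hger : ∀ {g'}, g' ∈ Ea a → (g'.erase a).Nonempty := by
      intro g' hg'
      rw [← Finset.card_pos, Finset.card_erase_of_mem (hEa_mem hg').2.1, hcardr (hEa_mem hg').1]
      omega
    have hbN : ∀ {g' b}, g' ∈ Ea a → b ∈ g'.erase a → b ∈ Nset a := by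
      intro g' b hg' hb
      have hb' : b ∈ g' \ {a} := by
        rw [Finset.mem_sdiff]
        rw [Finset.mem_erase] at hb
        exact ⟨hb.2, by simp [hb.1]⟩
      exact Finset.mem_filter.mpr ⟨(hEa_mem hg').2.2 hb',
        ⟨g', Finset.mem_filter.mpr ⟨hg', Finset.mem_of_mem_erase hb⟩⟩⟩
    by_contra hcon
    push_neg at hcon
    have hall : ∀ b ∈ Nset a, ∀ b' ∈ Nset a, Eab a b = Eab a b' := by
      intro b hb b' hb'
      exact hcon _ (Finset.mem_image_of_mem _ hb) _ (Finset.mem_image_of_mem _ hb')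
    obtain ⟨b, hbg⟩ := hger hg
    obtain ⟨b', hb'h⟩ := hger hh
    have hbN1 := hbN hg hbg
    have hbN2 := hbN hh hb'h
    have hsub : g.erase a ⊆ h.erase a := by
      intro c hc
      have hcN := hbN hg hc
      have hch : h ∈ Eab a c := by
        rw [hall c hcN b' hbN2]
        exact Finset.mem_filter.mpr ⟨hh, Finset.mem_of_mem_erase hb'h⟩
      exact Finset.mem_erase.mpr ⟨(Finset.mem_erase.mp hc).1, (Finset.mem_filter.mp hch).2⟩
    have hcards : (h.erase a).card ≤ (g.erase a).card := by
      rw [Finset.card_erase_of_mem (hEa_mem hg).2.1, Finset.card_erase_of_mem (hEa_mem hh).2.1,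
        hcardr (hEa_mem hg).1, hcardr (hEa_mem hh).1]
    have heq : g.erase a = h.erase a := Finset.eq_of_subset_of_card_le hsub hcards
    apply hgh
    have h3 : insert a (g.erase a) = insert a (h.erase a) := by rw [heq]
    rwa [Finset.insert_erase (hEa_mem hg).2.1, Finset.insert_erase (hEa_mem hh).2.1] at h3
  have hclasses2 : ∀ a ∈ A, 2 ≤ (classes a).card := by
    intro a ha
    obtain ⟨E₁, hE₁, E₂, hE₂, hne⟩ := htwo a ha
    exact Finset.one_lt_card.mpr ⟨E₁, hE₁, E₂, hE₂, hne⟩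
  have hrcast : ((r - 1 : ℕ) : ℝ) = (r : ℝ) - 1 := by
    have : 1 ≤ r := by omega
    push_cast [this]
    ring
  -- the key expansion property
  have hkey : ∀ W ⊆ A, ∀ X : Finset (Fin n),
      (∀ a ∈ W, ∃ miss : Finset (Finset (Finset (Fin n))), miss ⊆ classes a ∧ miss.card ≤ 1 ∧
        ∀ E ∈ classes a, E ∉ miss → fib a E ⊆ X) → 2 * W.card ≤ X.card := by
    intro W hWA X hmiss
    rcases W.eq_empty_or_nonempty with rfl | hWne
    · simp
    set good : Fin n → Finset (Finset (Fin n)) :=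
      fun a => (Ea a).filter (fun s => s \ {a} ⊆ X ∩ B) with hgood_def
    have hgoodbound : ∀ a ∈ W, (D - 2 * ((r : ℝ) - 1) * lg) ≤ ((good a).card : ℝ) := by
      intro a ha
      obtain ⟨miss, hmiss_sub, hmiss1, hmiss_cov⟩ := hmiss a ha
      set bad := (Ea a).filter (fun s => ¬ s \ {a} ⊆ X ∩ B) with hbad_def
      have hsumcard : (good a).card + bad.card = (Ea a).card :=
        Finset.card_filter_add_card_filter_not _
      have hbadsub : bad ⊆ miss.biUnion (fun E => (fib a E).biUnion
          (fun b => EH.filter (fun s => a ∈ s ∧ b ∈ s))) := by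
        intro s hs
        obtain ⟨hsEa, hnsub⟩ := Finset.mem_filter.mp hs
        obtain ⟨b, hbs, hbX⟩ := Finset.not_subset.mp hnsub
        have hbB : b ∈ B := (hEa_mem hsEa).2.2 hbs
        have hbsmem : b ∈ s := (Finset.mem_sdiff.mp hbs).1
        have hsEab : s ∈ Eab a b := Finset.mem_filter.mpr ⟨hsEa, hbsmem⟩
        have hbN : b ∈ Nset a := Finset.mem_filter.mpr ⟨hbB, ⟨s, hsEab⟩⟩
        have hclsb : Eab a b ∈ classes a := Finset.mem_image_of_mem _ hbN
        have hbfib : b ∈ fib a (Eab a b) := Finset.mem_filter.mpr ⟨hbN, rfl⟩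
        have hmissb : Eab a b ∈ miss := by
          by_contra hnm
          apply hbX
          refine Finset.mem_inter.mpr ⟨hmiss_cov _ hclsb hnm hbfib, hbB⟩
        exact Finset.mem_biUnion.mpr ⟨_, hmissb, Finset.mem_biUnion.mpr ⟨b, hbfib,
          Finset.mem_filter.mpr ⟨hEsub (hEa_mem hsEa).1, (hEa_mem hsEa).2.1, hbsmem⟩⟩⟩
      have hbadcard : (bad.card : ℝ) ≤ 2 * ((r : ℝ) - 1) * lg := by
        have h1 : bad.card ≤
            ∑ E ∈ miss, ∑ b ∈ fib a E, (EH.filter (fun s => a ∈ s ∧ b ∈ s)).card := by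
          calc bad.card ≤ (miss.biUnion (fun E => (fib a E).biUnion
                (fun b => EH.filter (fun s => a ∈ s ∧ b ∈ s)))).card :=
                Finset.card_le_card hbadsub
            _ ≤ ∑ E ∈ miss, ((fib a E).biUnion
                (fun b => EH.filter (fun s => a ∈ s ∧ b ∈ s))).card := Finset.card_biUnion_le
            _ ≤ ∑ E ∈ miss, ∑ b ∈ fib a E, (EH.filter (fun s => a ∈ s ∧ b ∈ s)).card :=
                Finset.sum_le_sum (fun E _ => Finset.card_biUnion_le)
        have h2 : ∀ E ∈ miss,
            (((∑ b ∈ fib a E, (EH.filter (fun s => a ∈ s ∧ b ∈ s)).card : ℕ)) : ℝ) ≤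
            ((r : ℝ) - 1) * (2 * lg) := by
          intro E hE
          have hfc : ((fib a E).card : ℝ) ≤ (r : ℝ) - 1 := by
            rw [← hrcast]
            exact_mod_cast hfib_card a (hWA ha) E (hmiss_sub hE)
          have h3 : (((∑ b ∈ fib a E, (EH.filter (fun s => a ∈ s ∧ b ∈ s)).card : ℕ)) : ℝ) ≤
              ∑ b ∈ fib a E, (2 * lg) := by
            push_cast
            apply Finset.sum_le_sum
            intro b hb
            apply hcod a b
            intro hab
            apply Finset.disjoint_left.mp hAB (hWA ha)
            rw [hab]
            exact (hNsetB a) ((hfibN a E) hb)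
          rw [Finset.sum_const, nsmul_eq_mul] at h3
          calc (((∑ b ∈ fib a E, (EH.filter (fun s => a ∈ s ∧ b ∈ s)).card : ℕ)) : ℝ)
              ≤ ((fib a E).card : ℝ) * (2 * lg) := h3
            _ ≤ ((r : ℝ) - 1) * (2 * lg) := by
                apply mul_le_mul_of_nonneg_right hfc
                linarith
        have h4 : (bad.card : ℝ) ≤ ∑ E ∈ miss, ((r : ℝ) - 1) * (2 * lg) := by
          calc (bad.card : ℝ) ≤
              (((∑ E ∈ miss, ∑ b ∈ fib a E, (EH.filter (fun s => a ∈ s ∧ b ∈ s)).card : ℕ)) : ℝ) := by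
                exact_mod_cast h1
            _ ≤ ∑ E ∈ miss, ((r : ℝ) - 1) * (2 * lg) := by
                push_cast
                apply Finset.sum_le_sum
                intro E hE
                have := h2 E hE
                push_cast at this
                exact this
        have h5 : ∑ E ∈ miss, ((r : ℝ) - 1) * (2 * lg) ≤ ((r : ℝ) - 1) * (2 * lg) := by
          rw [Finset.sum_const, nsmul_eq_mul]
          have hm1' : (miss.card : ℝ) ≤ 1 := by exact_mod_cast hmiss1
          have hrn : (0 : ℝ) ≤ ((r : ℝ) - 1) * (2 * lg) := by
            have h3r : (3 : ℝ) ≤ (r : ℝ) := by exact_mod_cast hr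
            nlinarith
          nlinarith
        calc (bad.card : ℝ) ≤ ∑ E ∈ miss, ((r : ℝ) - 1) * (2 * lg) := h4
          _ ≤ ((r : ℝ) - 1) * (2 * lg) := h5
          _ = 2 * ((r : ℝ) - 1) * lg := by ring
      have hEacard : D ≤ ((Ea a).card : ℝ) := by
        have h1 := hdeg a (hWA ha)
        rwa [show ((degIn n Eh a B : ℕ) : ℝ) = ((Ea a).card : ℝ) by rw [hdegEa a]] at h1
      have hgb : ((good a).card : ℝ) + (bad.card : ℝ) = ((Ea a).card : ℝ) := by
        exact_mod_cast hsumcard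
      linarith
    have hdisjgood : ∀ a ∈ W, ∀ b ∈ W, a ≠ b → Disjoint (good a) (good b) := by
      intro a ha b hb hab
      rw [Finset.disjoint_left]
      intro s hsa hsb
      have h1 := hcapA (hWA ha) (Finset.mem_of_mem_filter _ hsa)
      have h2 := hcapA (hWA hb) (Finset.mem_of_mem_filter _ hsb)
      apply hab
      have : ({a} : Finset (Fin n)) = {b} := by rw [← h1, ← h2]
      simpa using this
    have hbiU : (W.biUnion good) ⊆
        EH.filter (fun s => (s ∩ W).card = 1 ∧ s \ W ⊆ X ∩ B) := by
      intro s hs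
      obtain ⟨a, haW, hsa⟩ := Finset.mem_biUnion.mp hs
      obtain ⟨hsEa, hssub⟩ := Finset.mem_filter.mp hsa
      have hsW : s ∩ W = {a} := by
        apply Finset.Subset.antisymm
        · calc s ∩ W ⊆ s ∩ A := Finset.inter_subset_inter Finset.Subset.rfl hWA
            _ = {a} := hcapA (hWA haW) hsEa
        · intro x hx
          rw [Finset.mem_singleton] at hx
          subst hx
          exact Finset.mem_inter.mpr ⟨(hEa_mem hsEa).2.1, haW⟩
      refine Finset.mem_filter.mpr ⟨hEsub (hEa_mem hsEa).1, by rw [hsW]; simp, ?_⟩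
      intro x hx
      obtain ⟨hxs, hxW⟩ := Finset.mem_sdiff.mp hx
      have hxa : x ≠ a := by
        rintro rfl
        exact hxW haW
      exact hssub (Finset.mem_sdiff.mpr ⟨hxs, by simp [hxa]⟩)
    have hcount : ((W.card : ℕ) : ℝ) * (D - 2 * ((r : ℝ) - 1) * lg) ≤
        (eBetween n EH W (X ∩ B) : ℝ) := by
      have hc1 : ((W.card : ℕ) : ℝ) * (D - 2 * ((r : ℝ) - 1) * lg) =
          ∑ _a ∈ W, (D - 2 * ((r : ℝ) - 1) * lg) := by
        rw [Finset.sum_const, nsmul_eq_mul]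
      rw [hc1]
      calc ∑ a ∈ W, (D - 2 * ((r : ℝ) - 1) * lg) ≤ ∑ a ∈ W, ((good a).card : ℝ) :=
            Finset.sum_le_sum hgoodbound
        _ = (((∑ a ∈ W, (good a).card : ℕ)) : ℝ) := by push_cast; rfl
        _ = (((W.biUnion good).card : ℕ) : ℝ) := by rw [Finset.card_biUnion hdisjgood]
        _ ≤ (eBetween n EH W (X ∩ B) : ℝ) := by
            have := Finset.card_le_card hbiU
            exact_mod_cast this
    have hexp := expansion_lemma r n m ε p D EH A B hps hAB hAcard hBcard hε0 hε4 hp0 hlg1 hmn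
      M1 M2 M3 W hWA (X ∩ B) Finset.inter_subset_right hWne hcount
    calc 2 * W.card ≤ (X ∩ B).card := hexp
      _ ≤ X.card := Finset.card_le_card Finset.inter_subset_left
  obtain ⟨xf, yf, hmem, hxyne, hcross⟩ :=
    hall_select A classes fib (⟨0, hn0⟩ : Fin n) hclasses2 hkey
  have hxfB : ∀ a (ha : a ∈ A), xf a ∈ B ∧ yf a ∈ B := by
    intro a ha
    obtain ⟨E₁, hE₁, E₂, hE₂, hEne, hx, hy⟩ := hmem a ha
    exact ⟨(hNsetB a) ((hfibN a E₁) hx), (hNsetB a) ((hfibN a E₂) hy)⟩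
  have hedge : ∀ a, a ∈ A → ∃ g₁ g₂, g₁ ∈ Ea a ∧ g₂ ∈ Ea a ∧ g₁ ≠ g₂ ∧
      xf a ∈ g₁ ∧ yf a ∈ g₂ := by
    intro a ha
    obtain ⟨E₁, hE₁, E₂, hE₂, hEne, hx, hy⟩ := hmem a ha
    have hx' := Finset.mem_filter.mp hx
    have hy' := Finset.mem_filter.mp hy
    have hmemE1 : ∀ {g}, g ∈ E₁ → g ∈ Ea a ∧ xf a ∈ g := by
      intro g hg
      rw [← hx'.2] at hg
      exact ⟨(Finset.mem_filter.mp hg).1, (Finset.mem_filter.mp hg).2⟩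
    have hmemE2 : ∀ {g}, g ∈ E₂ → g ∈ Ea a ∧ yf a ∈ g := by
      intro g hg
      rw [← hy'.2] at hg
      exact ⟨(Finset.mem_filter.mp hg).1, (Finset.mem_filter.mp hg).2⟩
    have hE₁ne : E₁.Nonempty := by
      obtain ⟨g, hg⟩ := (Finset.mem_filter.mp hx'.1).2
      exact ⟨g, hx'.2 ▸ hg⟩
    have hE₂ne : E₂.Nonempty := by
      obtain ⟨g, hg⟩ := (Finset.mem_filter.mp hy'.1).2
      exact ⟨g, hy'.2 ▸ hg⟩
    by_cases hsub : E₁ ⊆ E₂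
    · obtain ⟨g₂, hg₂, hg₂n⟩ :=
        Finset.exists_of_ssubset (Finset.ssubset_iff_subset_ne.mpr ⟨hsub, hEne⟩)
      obtain ⟨g₁, hg₁⟩ := hE₁ne
      exact ⟨g₁, g₂, (hmemE1 hg₁).1, (hmemE2 hg₂).1, fun h => hg₂n (h ▸ hg₁),
        (hmemE1 hg₁).2, (hmemE2 hg₂).2⟩
    · obtain ⟨g₁, hg₁, hg₁n⟩ := Finset.not_subset.mp hsub
      obtain ⟨g₂, hg₂⟩ := hE₂ne
      exact ⟨g₁, g₂, (hmemE1 hg₁).1, (hmemE2 hg₂).1, fun h => hg₁n (h ▸ hg₂),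
        (hmemE1 hg₁).2, (hmemE2 hg₂).2⟩
  choose G1 G2 hg1 hg2 hgne hxg hyg using hedge
  set e : Fin n → Finset (Fin n) := fun a => if h : a ∈ A then G1 a h else ∅ with he_def
  set f : Fin n → Finset (Fin n) := fun a => if h : a ∈ A then G2 a h else ∅ with hf_def
  set τ : Finset (Fin n) → Fin n := fun g =>
    if hg : (g ∩ A).Nonempty then
      (if g = e ((g ∩ A).min' hg) then xf ((g ∩ A).min' hg) else yf ((g ∩ A).min' hg))
    else ⟨0, hn0⟩ with hτ_def
  have heval_e : ∀ a (ha : a ∈ A), e a = G1 a ha := by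
    intro a ha
    simp only [he_def]
    rw [dif_pos ha]
  have heval_f : ∀ a (ha : a ∈ A), f a = G2 a ha := by
    intro a ha
    simp only [hf_def]
    rw [dif_pos ha]
  have hcapAe : ∀ a (ha : a ∈ A), e a ∩ A = {a} := by
    intro a ha
    rw [heval_e a ha]
    exact hcapA ha (hg1 a ha)
  have hcapAf : ∀ a (ha : a ∈ A), f a ∩ A = {a} := by
    intro a ha
    rw [heval_f a ha]
    exact hcapA ha (hg2 a ha)
  have hef : ∀ a (ha : a ∈ A), e a ≠ f a := by
    intro a ha
    rw [heval_e a ha, heval_f a ha]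
    exact hgne a ha
  have hmin : ∀ (g : Finset (Fin n)) (a : Fin n), g ∩ A = {a} →
      ∃ hg : (g ∩ A).Nonempty, (g ∩ A).min' hg = a := by
    intro g a hsing
    have hne : (g ∩ A).Nonempty := by
      rw [hsing]
      exact Finset.singleton_nonempty a
    refine ⟨hne, ?_⟩
    apply le_antisymm
    · exact Finset.min'_le _ a (by rw [hsing]; exact Finset.mem_singleton_self a)
    · apply Finset.le_min'
      intro y hy
      rw [hsing, Finset.mem_singleton] at hy
      exact le_of_eq hy.symm
  have hτe : ∀ a (ha : a ∈ A), τ (e a) = xf a := by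
    intro a ha
    obtain ⟨hne, hmn'⟩ := hmin (e a) a (hcapAe a ha)
    simp only [hτ_def]
    rw [dif_pos hne, hmn', if_pos rfl]
  have hτf : ∀ a (ha : a ∈ A), τ (f a) = yf a := by
    intro a ha
    obtain ⟨hne, hmn'⟩ := hmin (f a) a (hcapAf a ha)
    simp only [hτ_def]
    rw [dif_pos hne, hmn', if_neg (fun h => (hef a ha) h.symm)]
  refine ⟨e, f, τ, ?_, ?_, ?_⟩
  · intro a ha
    have he' := heval_e a ha
    have hf' := heval_f a ha
    have hg1' := hg1 a ha
    have hg2' := hg2 a ha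
    refine ⟨?_, ?_, ?_, ?_, hef a ha, ?_, ?_, ?_, ?_, ?_, ?_⟩
    · rw [he']; exact (hEa_mem hg1').1
    · rw [hf']; exact (hEa_mem hg2').1
    · rw [he']; exact (hEa_mem hg1').2.1
    · rw [hf']; exact (hEa_mem hg2').2.1
    · rw [hcapAe a ha]; simp
    · rw [he', hcapB ha hg1', Finset.card_erase_of_mem (hEa_mem hg1').2.1,
        hcardr (hEa_mem hg1').1]
    · rw [hcapAf a ha]; simp
    · rw [hf', hcapB ha hg2', Finset.card_erase_of_mem (hEa_mem hg2').2.1,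
        hcardr (hEa_mem hg2').1]
    · rw [hτe a ha, he']
      exact Finset.mem_inter.mpr ⟨hxg a ha, (hxfB a ha).1⟩
    · rw [hτf a ha, hf']
      exact Finset.mem_inter.mpr ⟨hyg a ha, (hxfB a ha).2⟩
  · intro a ha b hb hab
    have h1 : ∀ g g' : Finset (Fin n), g ∩ A = {a} → g' ∩ A = {b} → g ≠ g' := by
      intro g g' hga hgb h
      rw [h, hgb] at hga
      exact hab (Finset.singleton_injective hga.symm)
    exact ⟨h1 _ _ (hcapAe a ha) (hcapAe b hb), h1 _ _ (hcapAe a ha) (hcapAf b hb),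
      h1 _ _ (hcapAf a ha) (hcapAf b hb)⟩
  · intro a ha b hb g hg g' hg' hgg'
    simp only [Finset.mem_insert, Finset.mem_singleton] at hg hg'
    rcases hg with rfl | rfl <;> rcases hg' with rfl | rfl
    · by_cases hab : a = b
      · subst hab; exact absurd rfl hgg'
      · rw [hτe a ha, hτe b hb]; exact (hcross a ha b hb hab).1
    · by_cases hab : a = b
      · subst hab; rw [hτe a ha, hτf a ha]; exact hxyne a ha
      · rw [hτe a ha, hτf b hb]; exact (hcross a ha b hb hab).2.1
    · by_cases hab : a = b
      · subst hab; rw [hτf a ha, hτe a ha]; exact Ne.symm (hxyne a ha)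
      · rw [hτf a ha, hτe b hb]; exact (hcross a ha b hb hab).2.2.1
    · by_cases hab : a = b
      · subst hab; exact absurd rfl hgg'
      · rw [hτf a ha, hτf b hb]; exact (hcross a ha b hb hab).2.2.2

/-- The 2-matching lemma: in a subgraph `H` of an `(ε,p)`-pseudorandom
`r`-uniform hypergraph with codegrees at most `2 ln n`, disjoint sets `A, B`
with `|A| = m ≥ n / ln^c n`, `|B| ≥ 4m` and every `a ∈ A` of degree at least
`(2^(1-r) + 2.5γ) p C(|B|, r-1)` into `B` admit a 2-matching for `(A, B)`:
pairs of distinct edges `(e a, f a)` through each `a ∈ A`, all `(1,r-1)`-edges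
for `(A,B)`, together with an injection `τ` from these edges into `B` with
`τ g ∈ g`. -/
theorem stmt19 (r : ℕ) (γ c : ℝ) (hr : 3 ≤ r) (hγ0 : 0 < γ)
    (hγ1 : γ < 1 / 2 ^ (r - 1)) (hc : 2 < c) :
    ∃ ε > (0 : ℝ), ∃ n₀ : ℕ, ∀ n ≥ n₀, ∀ (p : ℝ)
      (EH Eh : Finset (Finset (Fin n))) (A B : Finset (Fin n)) (m : ℕ),
      (∀ s ∈ EH, s.card = r) → Pseudorandom r n ε p EH →
      (∀ x y : Fin n, x ≠ y →
        ((EH.filter (fun s => x ∈ s ∧ y ∈ s)).card : ℝ) ≤ 2 * Real.log n) →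
      Eh ⊆ EH →
      Disjoint A B → A.card = m → (n : ℝ) / (Real.log n) ^ c ≤ (m : ℝ) →
      4 * m ≤ B.card →
      (Real.log n) ^ (c * r) / (n : ℝ) ^ (r - 1) ≤ p →
      (∀ a ∈ A, (1 / 2 ^ (r - 1) + 2.5 * γ) * p * (B.card.choose (r - 1)) ≤
        (degIn n Eh a B : ℝ)) →
      ∃ (e f : Fin n → Finset (Fin n)) (τ : Finset (Fin n) → Fin n),
        (∀ a ∈ A, e a ∈ Eh ∧ f a ∈ Eh ∧ a ∈ e a ∧ a ∈ f a ∧ e a ≠ f a ∧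
          (e a ∩ A).card = 1 ∧ (e a ∩ B).card = r - 1 ∧
          (f a ∩ A).card = 1 ∧ (f a ∩ B).card = r - 1 ∧
          τ (e a) ∈ e a ∩ B ∧ τ (f a) ∈ f a ∩ B) ∧
        (∀ a ∈ A, ∀ b ∈ A, a ≠ b → e a ≠ e b ∧ e a ≠ f b ∧ f a ≠ f b) ∧
        (∀ a ∈ A, ∀ b ∈ A,
          ∀ g ∈ ({e a, f a} : Finset (Finset (Fin n))),
          ∀ g' ∈ ({e b, f b} : Finset (Finset (Fin n))),
            g ≠ g' → τ g ≠ τ g') := by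
  classical
  have hc0 : (0:ℝ) < c := by linarith
  have hr3 : (3:ℝ) ≤ (r:ℝ) := by exact_mod_cast hr
  have hγ4 : (0:ℝ) < min γ (1/4) := lt_min hγ0 (by norm_num)
  refine ⟨min γ (1/4), hγ4, ?_⟩
  set ε := min γ (1/4) with hε_def
  have hε4 : ε ≤ 1/4 := min_le_right _ _
  have hεγ : ε ≤ γ := min_le_left _ _
  have hε0 : 0 < ε := hγ4
  have hF0 : (0:ℝ) < ((r-1).factorial : ℝ) := by exact_mod_cast (r-1).factorial_pos
  have hP10 : (0:ℝ) < 2^(r-1) := by positivity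
  have hP20 : (0:ℝ) < 4^(r-1) := by positivity
  have hT30 : (0:ℝ) < 3^(r-1) := by positivity
  have hT31 : (1:ℝ) ≤ 3^(r-1) := by
    calc (1:ℝ) = 1^(r-1) := by simp
      _ ≤ 3^(r-1) := pow_le_pow_left₀ (by norm_num) (by norm_num) _
  have hP14 : (4:ℝ) ≤ 2^(r-1) := by
    calc (4:ℝ) = 2^2 := by norm_num
      _ ≤ 2^(r-1) := pow_le_pow_right₀ (by norm_num) (by omega)
  have hP12 : (2:ℝ)^(r-1) * 2^(r-1) = 4^(r-1) := by
    rw [show (4:ℝ) = 2*2 by norm_num, mul_pow]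
  -- the constants for the eventual bounds
  set K1 : ℝ := (2*(r:ℝ)+2) * 4^(r-1) * ((r-1).factorial : ℝ) with hK1_def
  set K2 : ℝ := (2*(r:ℝ)) * 2^(r-1) * ((r-1).factorial : ℝ) / γ with hK2_def
  set K3 : ℝ := 13 * ((r-1).factorial : ℝ) / ε^3 with hK3_def
  set K4 : ℝ := 2 * 2^(r-1) * ((r-1).factorial : ℝ) with hK4_def
  have hexp1 : (0:ℝ) < c - 1 - ε := by
    have : ε ≤ 1/4 := hε4
    linarith
  have hexp2 : (0:ℝ) < c - 1 := by linarith
  have hT0 : Filter.Tendsto (fun k : ℕ => Real.log k) Filter.atTop Filter.atTop :=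
    Real.tendsto_log_atTop.comp tendsto_natCast_atTop_atTop
  have hev1 := hT0.eventually_ge_atTop 1
  have hev2 := ((tendsto_rpow_atTop hexp1).comp hT0).eventually_gt_atTop K1
  have hev3 := ((tendsto_rpow_atTop hexp2).comp hT0).eventually_gt_atTop (K2 + K3 + K4)
  have hev4 := ((tendsto_rpow_atTop (by norm_num : (0:ℝ) < 1/2)).comp
    (tendsto_natCast_atTop_atTop : Filter.Tendsto (fun k : ℕ => (k:ℝ)) Filter.atTop Filter.atTop)).eventually_ge_atTop
    (((r:ℝ)+5) * (2*c)^c)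
  have hev5 := Filter.eventually_ge_atTop (3:ℕ)
  obtain ⟨n₀, hn₀⟩ := Filter.eventually_atTop.mp ((((hev1.and hev2).and (hev3.and hev4)).and hev5))
  refine ⟨n₀, ?_⟩
  intro n hn p EH Eh A B m hunif hps hcod hEsub hAB hAcard hm hBcard hp hdeg
  obtain ⟨⟨⟨hlg1, hK1'⟩, ⟨hK234, hF2'⟩⟩, hn3⟩ := hn₀ n hn
  simp only [Function.comp] at hK1' hK234 hF2'
  -- basic facts about this instance
  set lg := Real.log n with hlg_def
  have hlg0 : (0:ℝ) ≤ lg := le_trans zero_le_one hlg1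
  have hlgpos : (0:ℝ) < lg := lt_of_lt_of_le zero_lt_one hlg1
  have hn0R : (0:ℝ) < (n:ℝ) := by
    have : 0 < n := by omega
    exact_mod_cast this
  set X := lg ^ c with hX_def
  have hX0 : (0:ℝ) < X := Real.rpow_pos_of_pos hlgpos c
  have hX1 : (1:ℝ) ≤ X := Real.one_le_rpow hlg1 (le_of_lt hc0)
  have hp0 : 0 < p := by
    refine lt_of_lt_of_le ?_ hp
    apply div_pos
    · exact Real.rpow_pos_of_pos hlgpos _
    · positivity
  have hXr : lg ^ (c * (r:ℝ)) = X ^ r := by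
    rw [hX_def, ← Real.rpow_natCast (lg ^ c) r, ← Real.rpow_mul hlg0]
  have hpX : X ^ r / (n:ℝ)^(r-1) ≤ p := by rw [← hXr]; exact hp
  have hXpow : X ^ r = X * X^(r-1) := by
    conv_lhs => rw [show r = (r-1)+1 by omega]
    rw [pow_succ, mul_comm]
  -- log bound: X ≤ (2c)^c √n
  have hlog_le : lg ≤ (n:ℝ) ^ ((1:ℝ)/(2*c)) * (2*c) := by
    have h := Real.log_le_rpow_div (le_of_lt hn0R) (show (0:ℝ) < 1/(2*c) by positivity)
    have he : (n:ℝ)^((1:ℝ)/(2*c)) / (1/(2*c)) = (n:ℝ)^((1:ℝ)/(2*c)) * (2*c) := by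
      field_simp
    rw [he] at h
    exact h
  have hXle : X ≤ (2*c)^c * (n:ℝ)^((1:ℝ)/2) := by
    have h1 : X ≤ ((n:ℝ)^((1:ℝ)/(2*c)) * (2*c)) ^ c :=
      Real.rpow_le_rpow hlg0 hlog_le (le_of_lt hc0)
    have hcc : (1:ℝ)/(2*c)*c = 1/2 := by
      field_simp
    rwa [Real.mul_rpow (by positivity) (by linarith), ← Real.rpow_mul (le_of_lt hn0R),
      hcc, mul_comm] at h1
  have hQm : ((r:ℝ)+5) ≤ (n:ℝ)/X := by
    rw [le_div_iff₀ hX0]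
    calc ((r:ℝ)+5) * X ≤ ((r:ℝ)+5) * ((2*c)^c * (n:ℝ)^((1:ℝ)/2)) := by
          apply mul_le_mul_of_nonneg_left hXle (by linarith)
      _ = (((r:ℝ)+5) * (2*c)^c) * (n:ℝ)^((1:ℝ)/2) := by ring
      _ ≤ (n:ℝ)^((1:ℝ)/2) * (n:ℝ)^((1:ℝ)/2) :=
          mul_le_mul_of_nonneg_right hF2' (by positivity)
      _ = (n:ℝ) := by
          rw [← Real.rpow_add hn0R]
          norm_num
  have hmR : ((r:ℝ)+5) ≤ (m:ℝ) := le_trans hQm hm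
  have hm5 : r + 5 ≤ m := by exact_mod_cast hmR
  have hm1 : 1 ≤ m := by omega
  have hnX0 : (0:ℝ) < (n:ℝ)/X := lt_of_lt_of_le (by linarith) hQm
  -- lower bound on p * C(B, r-1)
  have hCb0 : (0:ℝ) ≤ ((B.card.choose (r-1) : ℕ) : ℝ) := Nat.cast_nonneg _
  have hQX : 3^(r-1)/((r-1).factorial : ℝ) * X ≤ p * ((B.card.choose (r-1) : ℕ) : ℝ) := by
    have h1 : ((3*m:ℕ)^(r-1) : ℝ) ≤ ((r-1).factorial : ℝ) * (((4*m).choose (r-1) : ℕ):ℝ) := by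
      have h := aux_pow_le_choose m (r-1) (by omega)
      exact_mod_cast h
    have h2 : (((4*m).choose (r-1) : ℕ):ℝ) ≤ ((B.card.choose (r-1) : ℕ) : ℝ) := by
      exact_mod_cast Nat.choose_le_choose (r-1) hBcard
    have h3 : (3*(m:ℝ))^(r-1) / ((r-1).factorial : ℝ) ≤ ((B.card.choose (r-1) : ℕ) : ℝ) := by
      rw [div_le_iff₀ hF0]
      calc (3*(m:ℝ))^(r-1) = ((3*m:ℕ)^(r-1) : ℝ) := by push_cast; ring
        _ ≤ ((r-1).factorial : ℝ) * (((4*m).choose (r-1) : ℕ):ℝ) := h1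
        _ ≤ ((r-1).factorial : ℝ) * ((B.card.choose (r-1) : ℕ) : ℝ) :=
            mul_le_mul_of_nonneg_left h2 (le_of_lt hF0)
        _ = ((B.card.choose (r-1) : ℕ) : ℝ) * ((r-1).factorial : ℝ) := by ring
    have h4 : (3*((n:ℝ)/X))^(r-1) ≤ (3*(m:ℝ))^(r-1) := by
      apply pow_le_pow_left₀ (by positivity)
      linarith
    have hid : (X^r/(n:ℝ)^(r-1)) * ((3*((n:ℝ)/X))^(r-1)/((r-1).factorial : ℝ)) =
        3^(r-1)/((r-1).factorial : ℝ) * X := by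
      rw [mul_pow, div_pow, hXpow]
      field_simp
    calc 3^(r-1)/((r-1).factorial : ℝ) * X
        = (X^r/(n:ℝ)^(r-1)) * ((3*((n:ℝ)/X))^(r-1)/((r-1).factorial : ℝ)) := hid.symm
      _ ≤ p * ((3*((n:ℝ)/X))^(r-1)/((r-1).factorial : ℝ)) := by
          apply mul_le_mul_of_nonneg_right hpX
          positivity
      _ ≤ p * ((3*(m:ℝ))^(r-1)/((r-1).factorial : ℝ)) := by
          apply mul_le_mul_of_nonneg_left _ (le_of_lt hp0)
          exact (div_le_div_iff_of_pos_right hF0).mpr h4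
      _ ≤ p * ((B.card.choose (r-1) : ℕ) : ℝ) :=
          mul_le_mul_of_nonneg_left h3 (le_of_lt hp0)
  -- splitting of X into powers of lg
  have hXsplit1 : X = lg^((1:ℝ)+ε) * lg^(c-1-ε) := by
    rw [hX_def, ← Real.rpow_add hlgpos]
    congr 1
    ring
  have hXsplit2 : X = lg * lg^(c-1) := by
    calc X = lg ^ ((1:ℝ) + (c-1)) := by rw [hX_def]; congr 1; ring
      _ = lg ^ (1:ℝ) * lg ^ (c-1) := Real.rpow_add hlgpos 1 (c-1)
      _ = lg * lg^(c-1) := by rw [Real.rpow_one]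
  have hlg_le1 : lg ≤ lg^((1:ℝ)+ε) := by
    calc lg = lg^(1:ℝ) := (Real.rpow_one lg).symm
      _ ≤ lg^((1:ℝ)+ε) := Real.rpow_le_rpow_of_exponent_le hlg1 (by linarith)
  have hrp0 : (0:ℝ) ≤ lg^((1:ℝ)+ε) := le_trans hlg0 hlg_le1
  have hK2' : K2 < lg^(c-1) := by
    have h1 : (0:ℝ) < K3 := by rw [hK3_def]; positivity
    have h2 : (0:ℝ) ≤ K4 := by rw [hK4_def]; positivity
    linarith
  have hK3' : K3 < lg^(c-1) := by
    have h1 : (0:ℝ) ≤ K2 := by rw [hK2_def]; positivity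
    have h2 : (0:ℝ) ≤ K4 := by rw [hK4_def]; positivity
    linarith
  have hK4' : K4 < lg^(c-1) := by
    have h1 : (0:ℝ) ≤ K2 := by rw [hK2_def]; positivity
    have h2 : (0:ℝ) < K3 := by rw [hK3_def]; positivity
    linarith
  have hM1 : 2 * (1 + ε) * (p * ((m.choose (r - 1) : ℕ) : ℝ))
      + 2 * lg ^ ((1 : ℝ) + ε)
      < (1 / 2 ^ (r - 1) + 2.5 * γ) * p * ((B.card.choose (r - 1) : ℕ) : ℝ)
        - 2 * ((r : ℝ) - 1) * lg := by
    have hCm : (4:ℝ)^(r-1) * ((m.choose (r-1) : ℕ):ℝ) ≤ ((B.card.choose (r-1) : ℕ):ℝ) := by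
      exact_mod_cast aux_choose_ratio 4 (by norm_num) m B.card (r-1) hBcard
    set S := p * ((B.card.choose (r-1) : ℕ):ℝ) with hS_def
    have hS0 : (0:ℝ) ≤ S := by rw [hS_def]; positivity
    have hCm0 : (0:ℝ) ≤ p * ((m.choose (r-1) : ℕ):ℝ) := by positivity
    have hpCm : p * ((m.choose (r-1) : ℕ):ℝ) ≤ S / 4^(r-1) := by
      rw [le_div_iff₀ hP20, hS_def]
      calc p * ((m.choose (r-1) : ℕ):ℝ) * 4^(r-1)
          = p * (4^(r-1) * ((m.choose (r-1) : ℕ):ℝ)) := by ring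
        _ ≤ p * ((B.card.choose (r-1) : ℕ):ℝ) := mul_le_mul_of_nonneg_left hCm (le_of_lt hp0)
    have hA3 : (1 / 2 ^ (r - 1) + 2.5 * γ) * p * ((B.card.choose (r - 1) : ℕ) : ℝ)
        = S/2^(r-1) + 2.5*γ*S := by
      rw [hS_def]; ring
    have hδS : 4 * (S/4^(r-1)) ≤ (1 / 2 ^ (r - 1) + 2.5 * γ) * p
        * ((B.card.choose (r - 1) : ℕ) : ℝ) := by
      rw [hA3]
      have h1 : 4 * (S/4^(r-1)) ≤ S/2^(r-1) := by
        rw [show (4:ℝ) * (S/4^(r-1)) = 4*S/4^(r-1) by ring, div_le_div_iff₀ hP20 hP10, ← hP12]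
        have hq := mul_le_mul_of_nonneg_left hP14 (mul_nonneg hS0 (le_of_lt hP10))
        linarith only [hq]
      have h3 : (0:ℝ) ≤ 2.5*γ*S := by positivity
      linarith only [h1, h3]
    have hkey1 : (3/2) * (S/4^(r-1)) ≤ (1 / 2 ^ (r - 1) + 2.5 * γ) * p
        * ((B.card.choose (r - 1) : ℕ) : ℝ)
        - 2*(1+ε)*(p * ((m.choose (r-1) : ℕ):ℝ)) := by
      have h5 : 2*(1+ε)*(p * ((m.choose (r-1) : ℕ):ℝ)) ≤ (5/2) * (S/4^(r-1)) := by
        have h6 : 2*(1+ε) ≤ 5/2 := by linarith only [hε4]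
        exact mul_le_mul h6 hpCm hCm0 (by norm_num)
      linarith only [h5, hδS]
    have hXK : lg^((1:ℝ)+ε) * K1 < X := by
      calc lg^((1:ℝ)+ε) * K1 < lg^((1:ℝ)+ε) * lg^(c-1-ε) :=
            mul_lt_mul_of_pos_left hK1' (lt_of_lt_of_le hlgpos hlg_le1)
        _ = X := hXsplit1.symm
    have hid : 3^(r-1)/((r-1).factorial : ℝ) * (lg^((1:ℝ)+ε) * K1) / 4^(r-1)
        = lg^((1:ℝ)+ε) * ((2*(r:ℝ)+2) * 3^(r-1)) := by
      rw [hK1_def]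
      field_simp
    have hQ0 : (0:ℝ) < 3^(r-1)/((r-1).factorial : ℝ) := by positivity
    have h8 : (2 + 2*(r:ℝ)) * lg^((1:ℝ)+ε) < (3/2) * (S/4^(r-1)) := by
      have h9 : 3^(r-1)/((r-1).factorial : ℝ) * (lg^((1:ℝ)+ε) * K1) / 4^(r-1)
          < 3^(r-1)/((r-1).factorial : ℝ) * X / 4^(r-1) := by
        exact (div_lt_div_iff_of_pos_right hP20).mpr (mul_lt_mul_of_pos_left hXK hQ0)
      have h10 : 3^(r-1)/((r-1).factorial : ℝ) * X / 4^(r-1) ≤ S / 4^(r-1) := by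
        exact (div_le_div_iff_of_pos_right hP20).mpr hQX
      have h11 : (2 + 2*(r:ℝ)) * lg^((1:ℝ)+ε) ≤
          lg^((1:ℝ)+ε) * ((2*(r:ℝ)+2) * 3^(r-1)) := by
        have u1 : (2*(r:ℝ)+2) ≤ (2*(r:ℝ)+2)*3^(r-1) := by
          calc (2*(r:ℝ)+2) = (2*(r:ℝ)+2)*1 := by ring
            _ ≤ (2*(r:ℝ)+2)*3^(r-1) := mul_le_mul_of_nonneg_left hT31 (by linarith only [hr3])
        have u2 := mul_le_mul_of_nonneg_left u1 hrp0
        linarith only [u2]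
      have h12 : S / 4^(r-1) ≤ (3/2) * (S/4^(r-1)) := by
        have : (0:ℝ) ≤ S/4^(r-1) := by positivity
        linarith
      rw [← hid] at h11
      linarith only [h9, h10, h11, h12]
    have hstrict : 2 * lg^((1:ℝ)+ε) + 2*((r:ℝ)-1)*lg < (3/2) * (S/4^(r-1)) := by
      have h13 : 2*((r:ℝ)-1)*lg ≤ 2*(r:ℝ)*lg^((1:ℝ)+ε) := by
        have v0 : (0:ℝ) ≤ (r:ℝ)*lg := mul_nonneg (Nat.cast_nonneg r) hlg0
        have v2 : 2*(r:ℝ)*lg ≤ 2*(r:ℝ)*lg^((1:ℝ)+ε) := by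
          have := mul_le_mul_of_nonneg_left hlg_le1 (by positivity : (0:ℝ) ≤ 2*(r:ℝ))
          linarith only [this]
        linarith only [v0, v2, hlg0]
      linarith only [h8, h13]
    linarith only [hkey1, hstrict]
  have hM2 : (1 + ε) * (p * (((2 * m).choose (r - 1) : ℕ) : ℝ))
      < (1 / 2 ^ (r - 1) + 2.5 * γ) * p * ((B.card.choose (r - 1) : ℕ) : ℝ)
        - 2 * ((r : ℝ) - 1) * lg := by
    have hC2 : (2:ℝ)^(r-1) * (((2*m).choose (r-1) : ℕ):ℝ) ≤ ((B.card.choose (r-1):ℕ):ℝ) := by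
      exact_mod_cast aux_choose_ratio 2 (by norm_num) (2*m) B.card (r-1) (by omega)
    set S := p * ((B.card.choose (r-1) : ℕ):ℝ) with hS_def
    have hS0 : (0:ℝ) ≤ S := by rw [hS_def]; positivity
    have hpC2 : p * (((2*m).choose (r-1) : ℕ):ℝ) ≤ S / 2^(r-1) := by
      rw [le_div_iff₀ hP10, hS_def]
      calc p * (((2*m).choose (r-1) : ℕ):ℝ) * 2^(r-1)
          = p * (2^(r-1) * (((2*m).choose (r-1) : ℕ):ℝ)) := by ring
        _ ≤ p * ((B.card.choose (r-1) : ℕ):ℝ) := mul_le_mul_of_nonneg_left hC2 (le_of_lt hp0)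
    have hA3 : (1 / 2 ^ (r - 1) + 2.5 * γ) * p * ((B.card.choose (r - 1) : ℕ) : ℝ)
        = S/2^(r-1) + 2.5*γ*S := by
      rw [hS_def]; ring
    have f1 : S/2^(r-1) ≤ S/4 := div_le_div_of_nonneg_left hS0 (by norm_num) hP14
    have f3 : ε*(S/2^(r-1)) ≤ γ*(S/4) := by
      apply mul_le_mul hεγ f1 _ (le_of_lt hγ0)
      positivity
    have hA1 : (1 + ε) * (p * (((2 * m).choose (r - 1) : ℕ) : ℝ)) ≤
        S/2^(r-1) + γ*(S/4) := by
      have e2 : (1+ε) * (p * (((2*m).choose (r-1) : ℕ):ℝ)) ≤ (1+ε)*(S/2^(r-1)) :=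
        mul_le_mul_of_nonneg_left hpC2 (by linarith)
      have f6 : (1+ε)*(S/2^(r-1)) = S/2^(r-1) + ε*(S/2^(r-1)) := by ring
      linarith only [e2, f3, f6]
    have hlgK2 : lg * K2 < X := by
      calc lg * K2 < lg * lg^(c-1) := mul_lt_mul_of_pos_left hK2' hlgpos
        _ = X := hXsplit2.symm
    have hid2 : 9*γ*(3^(r-1)/((r-1).factorial : ℝ) * (lg * K2))/2^(r-1)
        = 18*(r:ℝ)*3^(r-1)*lg := by
      rw [hK2_def]
      field_simp
      ring
    have hA2 : 2*((r:ℝ)-1)*lg < 9*γ*(S/2^(r-1)) := by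
      have g1 : 2*((r:ℝ)-1)*lg ≤ 18*(r:ℝ)*3^(r-1)*lg := by
        have w0 : (0:ℝ) ≤ (r:ℝ)*lg := mul_nonneg (Nat.cast_nonneg r) hlg0
        have w3 : (0:ℝ) ≤ 18*(r:ℝ)*lg*(3^(r-1)-1) :=
          mul_nonneg (mul_nonneg (mul_nonneg (by norm_num) (Nat.cast_nonneg r)) hlg0)
            (by linarith only [hT31])
        linarith only [w0, w3, hlg0]
      have g2 : 9*γ*(3^(r-1)/((r-1).factorial : ℝ) * (lg * K2))/2^(r-1)
          < 9*γ*(3^(r-1)/((r-1).factorial : ℝ) * X)/2^(r-1) := by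
        have hQ0 : (0:ℝ) < 3^(r-1)/((r-1).factorial : ℝ) := by positivity
        exact (div_lt_div_iff_of_pos_right hP10).mpr (mul_lt_mul_of_pos_left
          (mul_lt_mul_of_pos_left hlgK2 hQ0) (by positivity))
      have g3 : 9*γ*(3^(r-1)/((r-1).factorial : ℝ) * X)/2^(r-1) ≤ 9*γ*S/2^(r-1) := by
        exact (div_le_div_iff_of_pos_right hP10).mpr (mul_le_mul_of_nonneg_left hQX (by positivity))
      have g4 : 9*γ*S/2^(r-1) = 9*γ*(S/2^(r-1)) := by ring
      rw [← hid2] at g1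
      linarith only [g1, g2, g3, g4]
    have f4 : 9*γ*(S/2^(r-1)) ≤ 9*γ*(S/4) := by
      apply mul_le_mul_of_nonneg_left f1
      positivity
    have hA4 : γ*S = 4*(γ*(S/4)) := by ring
    rw [hA3]
    linarith only [hA1, hA2, f4, hA4]
  have hD2 : (2:ℝ) ≤ (1 / 2 ^ (r - 1) + 2.5 * γ) * p * ((B.card.choose (r - 1) : ℕ) : ℝ) := by
    set S := p * ((B.card.choose (r-1) : ℕ):ℝ) with hS_def
    have hS0 : (0:ℝ) ≤ S := by rw [hS_def]; positivity
    have hA3 : (1 / 2 ^ (r - 1) + 2.5 * γ) * p * ((B.card.choose (r - 1) : ℕ) : ℝ)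
        = S/2^(r-1) + 2.5*γ*S := by
      rw [hS_def]; ring
    have hlgK4 : lg * K4 ≤ X := by
      calc lg * K4 ≤ lg * lg^(c-1) := mul_le_mul_of_nonneg_left (le_of_lt hK4') hlg0
        _ = X := hXsplit2.symm
    have hid4 : (3^(r-1)/((r-1).factorial : ℝ) * (lg * K4))/2^(r-1) = 2*3^(r-1)*lg := by
      rw [hK4_def]
      field_simp
    have h1 : (2:ℝ) ≤ 2*3^(r-1)*lg := by
      have x1 : (1:ℝ) ≤ 3^(r-1)*lg := by
        calc (1:ℝ) = 1*1 := by ring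
          _ ≤ 3^(r-1)*lg := mul_le_mul hT31 hlg1 zero_le_one (by positivity)
      linarith only [x1]
    have h2 : (3^(r-1)/((r-1).factorial : ℝ) * (lg * K4))/2^(r-1)
        ≤ (3^(r-1)/((r-1).factorial : ℝ) * X)/2^(r-1) := by
      have hQ0 : (0:ℝ) < 3^(r-1)/((r-1).factorial : ℝ) := by positivity
      exact (div_le_div_iff_of_pos_right hP10).mpr (mul_le_mul_of_nonneg_left hlgK4 (le_of_lt hQ0))
    have h3 : (3^(r-1)/((r-1).factorial : ℝ) * X)/2^(r-1) ≤ S/2^(r-1) := by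
      exact (div_le_div_iff_of_pos_right hP10).mpr hQX
    have h4 : (0:ℝ) ≤ 2.5*γ*S := by positivity
    have hh1 : (2:ℝ) ≤ (3^(r-1)/((r-1).factorial : ℝ) * (lg * K4))/2^(r-1) := by
      rw [hid4]
      exact h1
    rw [hA3]
    linarith only [hh1, h2, h3, h4]
  have hM3 : (13 * (Nat.factorial (r - 1)) * lg / (ε ^ 3 * p)) ^
      ((1 : ℝ) / ((r:ℝ) - 1)) ≤ (m : ℝ) := by
    have hrm1 : (0:ℝ) < (r:ℝ)-1 := by linarith
    have hbase0 : (0:ℝ) ≤ 13 * (Nat.factorial (r - 1)) * lg / (ε ^ 3 * p) := by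
      apply div_nonneg
      · have : (0:ℝ) ≤ (13:ℝ) * (Nat.factorial (r-1) : ℝ) := by positivity
        exact mul_nonneg this hlg0
      · positivity
    have hinvp : 1/p ≤ (n:ℝ)^(r-1)/X^r := by
      rw [div_le_div_iff₀ hp0 (by positivity)]
      have h5 : X^r ≤ p * (n:ℝ)^(r-1) := (div_le_iff₀ (by positivity)).mp hpX
      linarith
    have h13X : 13 * ((Nat.factorial (r - 1) : ℕ):ℝ) * lg / ε^3 ≤ X := by
      have h6 : 13 * ((Nat.factorial (r - 1) : ℕ):ℝ) / ε^3 = K3 := by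
        rw [hK3_def]
      calc 13 * ((Nat.factorial (r - 1) : ℕ):ℝ) * lg / ε^3
          = lg * (13 * ((Nat.factorial (r - 1) : ℕ):ℝ) / ε^3) := by ring
        _ = lg * K3 := by rw [h6]
        _ ≤ lg * lg^(c-1) := mul_le_mul_of_nonneg_left (le_of_lt hK3') hlg0
        _ = X := hXsplit2.symm
    have hstep : 13 * (Nat.factorial (r - 1)) * lg / (ε ^ 3 * p) ≤ (m:ℝ)^(r-1) := by
      have s1 : 13 * ((Nat.factorial (r - 1)):ℝ) * lg / (ε ^ 3 * p)
          = (13 * ((Nat.factorial (r - 1)):ℝ) * lg / ε^3) * (1/p) := by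
        field_simp
      have s2 : (13 * ((Nat.factorial (r - 1)):ℝ) * lg / ε^3) * (1/p) ≤
          X * ((n:ℝ)^(r-1)/X^r) := by
        apply mul_le_mul h13X hinvp (by positivity) (le_of_lt hX0)
      have s3 : X * ((n:ℝ)^(r-1)/X^r) = ((n:ℝ)/X)^(r-1) := by
        rw [hXpow, div_pow]
        field_simp
      have s4 : ((n:ℝ)/X)^(r-1) ≤ (m:ℝ)^(r-1) :=
        pow_le_pow_left₀ (le_of_lt hnX0) hm _
      rw [s1]
      calc (13 * ((Nat.factorial (r - 1)):ℝ) * lg / ε^3) * (1/p)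
          ≤ X * ((n:ℝ)^(r-1)/X^r) := s2
        _ = ((n:ℝ)/X)^(r-1) := s3
        _ ≤ (m:ℝ)^(r-1) := s4
    have hcol : (((m:ℝ))^((r-1 : ℕ)))^((1:ℝ)/((r:ℝ)-1)) = (m:ℝ) := by
      rw [← Real.rpow_natCast (m:ℝ) (r-1), ← Real.rpow_mul (Nat.cast_nonneg m)]
      have hrc : (((r-1 : ℕ)):ℝ) = (r:ℝ)-1 := by
        push_cast [Nat.cast_sub (by omega : 1 ≤ r)]
        ring
      rw [hrc, mul_one_div, div_self (ne_of_gt hrm1), Real.rpow_one]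
    calc (13 * (Nat.factorial (r - 1)) * lg / (ε ^ 3 * p)) ^ ((1 : ℝ) / ((r:ℝ) - 1))
        ≤ (((m:ℝ))^((r-1 : ℕ)))^((1:ℝ)/((r:ℝ)-1)) := by
          apply Real.rpow_le_rpow hbase0 hstep
          apply div_nonneg zero_le_one (le_of_lt hrm1)
      _ = (m:ℝ) := hcol
  exact main_matching r n m ε p _ EH Eh A B hr hunif hps hcod hEsub hAB hAcard hBcard hm1
    hε0 hε4 hp0 hlg1 hdeg hD2 hM1 hM2 hM3
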